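/- Let 0 < s < 1 and n > 2s. There exists a constant C > 0 depending only on n and s such that for every measurable f : B₁ → ℝ with ∫_{B₁} (1-|y|)^s |f(y)| dy < ∞, the Green potential satisfies ∫_{B₁} |(G*f)(x)| dx ≤ C ∫_{B₁} (1-|y|)^s |f(y)| dy. -/

import Mathlib

open Metric MeasureTheory Real Set
open scoped ENNReal NNReal

/-- The Green-type kernel
`G(x,y) = |x-y|^{2s-n} ∫₀^{ρ(x,y)} t^{s-1} (1+t)^{-n/2} dt` with
`ρ(x,y) = (1-|x|²)(1-|y|²)/|x-y|²`. -/
noncomputable def greenKer (n : ℕ) (s : ℝ) (x y : EuclideanSpace ℝ (Fin n)) : ℝ :=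
  ‖x - y‖ ^ (2 * s - (n : ℝ)) *
    ∫ t in (0 : ℝ)..((1 - ‖x‖ ^ 2) * (1 - ‖y‖ ^ 2) / ‖x - y‖ ^ 2),
      t ^ (s - 1) * (1 + t) ^ (-(n : ℝ) / 2)

namespace Stmt5Aux


/-- the 1-D integrand -/
noncomputable def g (n : ℕ) (s : ℝ) (t : ℝ) : ℝ := t ^ (s - 1) * (1 + t) ^ (-(n : ℝ) / 2)

lemma g_meas (n : ℕ) (s : ℝ) : Measurable (g n s) := by
  unfold g
  fun_prop

lemma g_nonneg (n : ℕ) (s : ℝ) {t : ℝ} (ht : 0 ≤ t) : 0 ≤ g n s t :=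
  mul_nonneg (rpow_nonneg ht _) (rpow_nonneg (by linarith) _)

lemma g_le_rpow (n : ℕ) (s : ℝ) {t : ℝ} (ht : 0 ≤ t) : g n s t ≤ t ^ (s - 1) := by
  have hn0 : (0 : ℝ) ≤ (n : ℝ) := n.cast_nonneg
  have h1 : (1 + t) ^ (-(n : ℝ) / 2) ≤ 1 :=
    rpow_le_one_of_one_le_of_nonpos (by linarith) (by linarith)
  calc g n s t ≤ t ^ (s - 1) * 1 :=
        mul_le_mul_of_nonneg_left h1 (rpow_nonneg ht _)
    _ = t ^ (s - 1) := mul_one _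

lemma g_intOn_Ioi (n : ℕ) {s : ℝ} (hs0 : 0 < s) (hn : 2 * s < (n : ℝ)) :
    IntegrableOn (g n s) (Ioi (0 : ℝ)) := by
  have h1 : IntegrableOn (g n s) (Ioc (0 : ℝ) 1) := by
    have hi : IntegrableOn (fun t : ℝ => t ^ (s - 1)) (Ioc (0 : ℝ) 1) := by
      have := (intervalIntegral.intervalIntegrable_rpow' (a := 0) (b := 1)
        (r := s - 1) (by linarith))
      rwa [intervalIntegrable_iff_integrableOn_Ioc_of_le (by norm_num)] at this
    refine MeasureTheory.Integrable.mono hi ((g_meas n s).aestronglyMeasurable) ?_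
    filter_upwards [ae_restrict_mem measurableSet_Ioc] with t ht
    rw [Real.norm_eq_abs, Real.norm_eq_abs, abs_of_nonneg (g_nonneg n s ht.1.le),
      abs_of_nonneg (rpow_nonneg ht.1.le _)]
    exact g_le_rpow n s ht.1.le
  have h2 : IntegrableOn (g n s) (Ioi (1 : ℝ)) := by
    have hi : IntegrableOn (fun t : ℝ => t ^ (s - 1 + -(n : ℝ) / 2)) (Ioi (1 : ℝ)) :=
      integrableOn_Ioi_rpow_of_lt (by linarith) one_pos
    refine MeasureTheory.Integrable.mono hi ((g_meas n s).aestronglyMeasurable) ?_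
    filter_upwards [ae_restrict_mem measurableSet_Ioi] with t ht
    have ht0 : (0 : ℝ) < t := lt_trans one_pos ht
    rw [Real.norm_eq_abs, Real.norm_eq_abs, abs_of_nonneg (g_nonneg n s ht0.le),
      abs_of_nonneg (rpow_nonneg ht0.le _), Real.rpow_add ht0]
    refine mul_le_mul_of_nonneg_left ?_ (rpow_nonneg ht0.le _)
    exact rpow_le_rpow_of_nonpos ht0 (by linarith) (by
      have hn0 : (0 : ℝ) ≤ (n : ℝ) := n.cast_nonneg; linarith)
  have : Ioi (0 : ℝ) = Ioc 0 1 ∪ Ioi 1 := (Ioc_union_Ioi_eq_Ioi (by norm_num)).symm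
  rw [this]
  exact h1.union h2

/-- primitive of `g` from `0`, cut off at negative arguments -/
noncomputable def F (n : ℕ) (s : ℝ) (r : ℝ) : ℝ := ∫ t in Ioc (0 : ℝ) (max r 0), g n s t

lemma F_nonneg (n : ℕ) (s : ℝ) (r : ℝ) : 0 ≤ F n s r :=
  setIntegral_nonneg measurableSet_Ioc fun t ht => g_nonneg n s ht.1.le

lemma F_mono (n : ℕ) {s : ℝ} (hs0 : 0 < s) (hn : 2 * s < (n : ℝ)) : Monotone (F n s) := by
  intro a b hab
  refine setIntegral_mono_set ((g_intOn_Ioi n hs0 hn).mono_set Ioc_subset_Ioi_self) ?_ ?_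
  · filter_upwards [ae_restrict_mem measurableSet_Ioc] with t ht using g_nonneg n s ht.1.le
  · exact HasSubset.Subset.eventuallyLE (Ioc_subset_Ioc_right (max_le_max hab le_rfl))

lemma F_meas (n : ℕ) {s : ℝ} (hs0 : 0 < s) (hn : 2 * s < (n : ℝ)) : Measurable (F n s) :=
  (F_mono n hs0 hn).measurable

lemma F_le_cB (n : ℕ) {s : ℝ} (hs0 : 0 < s) (hn : 2 * s < (n : ℝ)) (r : ℝ) :
    F n s r ≤ ∫ t in Ioi (0 : ℝ), g n s t := by
  refine setIntegral_mono_set (g_intOn_Ioi n hs0 hn) ?_ ?_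
  · filter_upwards [ae_restrict_mem measurableSet_Ioi] with t ht using g_nonneg n s ht.le
  · exact HasSubset.Subset.eventuallyLE Ioc_subset_Ioi_self

lemma F_le_pow (n : ℕ) {s : ℝ} (hs0 : 0 < s) (hn : 2 * s < (n : ℝ)) {r : ℝ} (hr : 0 ≤ r) :
    F n s r ≤ r ^ s / s := by
  have hmax : max r 0 = r := max_eq_left hr
  have h1 : F n s r ≤ ∫ t in Ioc (0 : ℝ) r, t ^ (s - 1) := by
    rw [F, hmax]
    refine setIntegral_mono_on ((g_intOn_Ioi n hs0 hn).mono_set Ioc_subset_Ioi_self) ?_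
      measurableSet_Ioc fun t ht => g_le_rpow n s ht.1.le
    have := (intervalIntegral.intervalIntegrable_rpow' (a := 0) (b := r)
      (r := s - 1) (by linarith))
    rwa [intervalIntegrable_iff_integrableOn_Ioc_of_le hr] at this
  have h2 : ∫ t in Ioc (0 : ℝ) r, t ^ (s - 1) = r ^ s / s := by
    rw [← intervalIntegral.integral_of_le hr, integral_rpow (Or.inl (by linarith))]
    rw [Real.zero_rpow (by linarith : s - 1 + 1 ≠ 0)]
    ring_nf
  linarith



noncomputable def rho {n : ℕ} (x y : EuclideanSpace ℝ (Fin n)) : ℝ :=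
  (1 - ‖x‖ ^ 2) * (1 - ‖y‖ ^ 2) / ‖x - y‖ ^ 2

lemma rho_nonneg {n : ℕ} {x y : EuclideanSpace ℝ (Fin n)} (hx : ‖x‖ ≤ 1) (hy : ‖y‖ ≤ 1) :
    0 ≤ rho x y := by
  have h1 : ‖x‖ ^ 2 ≤ 1 := by nlinarith [norm_nonneg x]
  have h2 : ‖y‖ ^ 2 ≤ 1 := by nlinarith [norm_nonneg y]
  exact div_nonneg (mul_nonneg (by linarith) (by linarith)) (by positivity)

noncomputable def G' (n : ℕ) (s : ℝ) (x y : EuclideanSpace ℝ (Fin n)) : ℝ :=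
  ‖x - y‖ ^ (2 * s - (n : ℝ)) * F n s (rho x y)

lemma greenKer_eq {n : ℕ} {s : ℝ} {x y : EuclideanSpace ℝ (Fin n)}
    (hx : ‖x‖ ≤ 1) (hy : ‖y‖ ≤ 1) : greenKer n s x y = G' n s x y := by
  have h0 : 0 ≤ rho x y := rho_nonneg hx hy
  have h0' : (0:ℝ) ≤ (1 - ‖x‖ ^ 2) * (1 - ‖y‖ ^ 2) / ‖x - y‖ ^ 2 := h0
  rw [greenKer, G', F, max_eq_left h0]
  congr 1
  rw [intervalIntegral.integral_of_le h0']
  rfl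

lemma G'_nonneg (n : ℕ) (s : ℝ) (x y : EuclideanSpace ℝ (Fin n)) : 0 ≤ G' n s x y :=
  mul_nonneg (rpow_nonneg (norm_nonneg _) _) (F_nonneg n s _)

lemma G'_meas (n : ℕ) {s : ℝ} (hs0 : 0 < s) (hn : 2 * s < (n : ℝ)) :
    Measurable (fun p : EuclideanSpace ℝ (Fin n) × EuclideanSpace ℝ (Fin n) =>
      G' n s p.1 p.2) := by
  unfold G' rho
  have h1 : Measurable fun p : EuclideanSpace ℝ (Fin n) × EuclideanSpace ℝ (Fin n) =>
      ‖p.1 - p.2‖ ^ (2 * s - (n : ℝ)) := by fun_prop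
  refine h1.mul ((F_meas n hs0 hn).comp ?_)
  fun_prop

lemma G'_meas_left (n : ℕ) {s : ℝ} (hs0 : 0 < s) (hn : 2 * s < (n : ℝ))
    (y : EuclideanSpace ℝ (Fin n)) : Measurable fun x => G' n s x y := by
  have := (G'_meas n hs0 hn).comp
    (measurable_id.prodMk measurable_const :
      Measurable fun x : EuclideanSpace ℝ (Fin n) => (x, y))
  exact this

lemma G'_meas_right (n : ℕ) {s : ℝ} (hs0 : 0 < s) (hn : 2 * s < (n : ℝ))
    (x : EuclideanSpace ℝ (Fin n)) : Measurable fun y => G' n s x y := by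
  have := (G'_meas n hs0 hn).comp
    (measurable_const.prodMk measurable_id :
      Measurable fun y : EuclideanSpace ℝ (Fin n) => (x, y))
  exact this

noncomputable def cB (n : ℕ) (s : ℝ) : ℝ := ∫ t in Ioi (0 : ℝ), g n s t
noncomputable def K (n : ℕ) (s : ℝ) : ℝ := max (cB n s) ((8 : ℝ) ^ s / s)

lemma K_pos {n : ℕ} {s : ℝ} (hs0 : 0 < s) : 0 < K n s :=
  lt_max_of_lt_right (by positivity)

lemma G'_le {n : ℕ} {s : ℝ} (hs0 : 0 < s) (hn : 2 * s < (n : ℝ))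
    {x y : EuclideanSpace ℝ (Fin n)} (hx : ‖x‖ < 1) (hy : ‖y‖ < 1) (hxy : x ≠ y) :
    G' n s x y ≤ K n s * (1 - ‖y‖) ^ s * ‖x - y‖ ^ (s - (n : ℝ)) := by
  set r := ‖x - y‖ with hrdef
  have hr : 0 < r := by
    rw [hrdef]; exact norm_sub_pos_iff.mpr hxy
  set d := 1 - ‖y‖ with hddef
  have hd : 0 < d := by rw [hddef]; linarith
  have hsplit : r ^ (2 * s - (n : ℝ)) = r ^ s * r ^ (s - (n : ℝ)) := by
    rw [← Real.rpow_add hr]; ring_nf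
  rcases le_or_gt r d with hcase | hcase
  · -- near-diagonal: F ≤ cB
    have h1 : F n s (rho x y) ≤ cB n s := F_le_cB n hs0 hn _
    have h2 : r ^ s ≤ d ^ s := rpow_le_rpow hr.le hcase hs0.le
    have hcB : 0 ≤ cB n s := le_trans (F_nonneg n s 0) (F_le_cB n hs0 hn 0)
    calc G' n s x y = r ^ s * r ^ (s - (n : ℝ)) * F n s (rho x y) := by
          rw [G', ← hsplit]
      _ ≤ d ^ s * r ^ (s - (n : ℝ)) * cB n s := by
          have hrs : (0:ℝ) ≤ r ^ (s - (n : ℝ)) := rpow_nonneg hr.le _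
          have := mul_le_mul (mul_le_mul_of_nonneg_right h2 hrs) h1 (F_nonneg n s _)
            (by positivity)
          exact this
      _ ≤ K n s * d ^ s * r ^ (s - (n : ℝ)) := by
          have : cB n s ≤ K n s := le_max_left _ _
          have hds : (0:ℝ) ≤ d ^ s := rpow_nonneg hd.le _
          have hrs : (0:ℝ) ≤ r ^ (s - (n : ℝ)) := rpow_nonneg hr.le _
          nlinarith [mul_le_mul_of_nonneg_left this (mul_nonneg hds hrs)]
  · -- far from diagonal
    have hnormxy : |‖x‖ - ‖y‖| ≤ r := abs_norm_sub_norm_le x y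
    have hx1 : 1 - ‖x‖ ≤ d + r := by
      have := abs_le.mp hnormxy
      rw [hddef]; linarith [this.1]
    have hnum1 : 1 - ‖x‖ ^ 2 ≤ 4 * r := by nlinarith [norm_nonneg x]
    have hnum2 : 1 - ‖y‖ ^ 2 ≤ 2 * d := by nlinarith [norm_nonneg y]
    have hnum1' : 0 ≤ 1 - ‖x‖ ^ 2 := by nlinarith [norm_nonneg x]
    have hnum2' : 0 ≤ 1 - ‖y‖ ^ 2 := by nlinarith [norm_nonneg y]
    have hrho : rho x y ≤ 8 * d / r := by
      have h8 : (1 - ‖x‖ ^ 2) * (1 - ‖y‖ ^ 2) ≤ 8 * d * r := by nlinarith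
      have hstep : rho x y ≤ 8 * d * r / r ^ 2 := by
        rw [rho]
        gcongr
      have heq' : 8 * d * r / r ^ 2 = 8 * d / r := by
        field_simp
      linarith
    have hF : F n s (rho x y) ≤ (8 * d / r) ^ s / s := by
      refine le_trans (F_le_pow n hs0 hn (rho_nonneg hx.le hy.le)) ?_
      have := rpow_le_rpow (rho_nonneg hx.le hy.le) hrho hs0.le
      gcongr
    have hpow : (8 * d / r) ^ s = 8 ^ s * d ^ s / r ^ s := by
      rw [Real.div_rpow (by positivity) hr.le, Real.mul_rpow (by norm_num) hd.le]
    have hG : G' n s x y ≤ r ^ (2 * s - (n : ℝ)) * ((8 ^ s * d ^ s / r ^ s) / s) := by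
      rw [G']
      refine mul_le_mul_of_nonneg_left ?_ (rpow_nonneg hr.le _)
      rw [← hpow]; exact hF
    have heq : r ^ (2 * s - (n : ℝ)) * ((8 ^ s * d ^ s / r ^ s) / s)
        = (8 ^ s / s) * d ^ s * (r ^ (2 * s - (n : ℝ)) / r ^ s) := by ring
    have heq2 : r ^ (2 * s - (n : ℝ)) / r ^ s = r ^ (s - (n : ℝ)) := by
      rw [← Real.rpow_sub hr]; ring_nf
    refine le_trans hG ?_
    rw [heq, heq2]
    have h8 : (8:ℝ) ^ s / s ≤ K n s := le_max_right _ _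
    have : (8:ℝ) ^ s / s * (d ^ s * r ^ (s - (n:ℝ))) ≤ K n s * (d ^ s * r ^ (s - (n:ℝ))) := by
      refine mul_le_mul_of_nonneg_right h8 (by positivity)
    calc (8:ℝ) ^ s / s * d ^ s * (r ^ (s - (n:ℝ))) = 8 ^ s / s * (d ^ s * r ^ (s - (n:ℝ))) := by ring
      _ ≤ K n s * (d ^ s * r ^ (s - (n:ℝ))) := this
      _ = K n s * d ^ s * r ^ (s - (n:ℝ)) := by ring



lemma nontrivial_E {n : ℕ} (hn1 : 1 ≤ n) : Nontrivial (EuclideanSpace ℝ (Fin n)) := by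
  have : 0 < Module.finrank ℝ (EuclideanSpace ℝ (Fin n)) := by
    rw [finrank_euclideanSpace_fin]; omega
  exact Module.nontrivial_of_finrank_pos this

lemma singleton_null {n : ℕ} (hn1 : 1 ≤ n) (y : EuclideanSpace ℝ (Fin n)) :
    volume ({y} : Set (EuclideanSpace ℝ (Fin n))) = 0 := by
  have h : ({y} : Set (EuclideanSpace ℝ (Fin n))) = closedBall y 0 := by
    simp [Metric.closedBall_zero]
  rw [h, Measure.addHaar_closedBall volume y le_rfl]
  rw [finrank_euclideanSpace_fin]
  rw [zero_pow (by omega : n ≠ 0)]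
  simp

/-- finiteness of the model integral over the ball of radius 2 -/
noncomputable def C2 (n : ℕ) (s : ℝ) : ℝ≥0∞ :=
  ∫⁻ z in ball (0 : EuclideanSpace ℝ (Fin n)) 2, ENNReal.ofReal (‖z‖ ^ (s - (n : ℝ)))

lemma C2_lt_top {n : ℕ} {s : ℝ} (hn1 : 1 ≤ n) (hs0 : 0 < s) (hsn : s < (n : ℝ)) :
    C2 n s < ⊤ := by
  classical
  haveI : Nontrivial (EuclideanSpace ℝ (Fin n)) := nontrivial_E hn1
  set E := EuclideanSpace ℝ (Fin n)
  set v : ℝ≥0∞ := volume (ball (0 : E) 1) with hv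
  have hvlt : v < ⊤ := measure_ball_lt_top
  -- annuli
  set A : ℕ → Set E := fun k =>
    ball (0 : E) ((2 : ℝ) ^ ((1 : ℝ) - (k : ℝ))) \ closedBall 0 ((2 : ℝ) ^ (-(k : ℝ) - 1))
    with hA
  -- covering
  have hcover : ball (0 : E) 2 \ {0} ⊆ ⋃ k, A k := by
    intro z hz
    obtain ⟨hz2, hz0⟩ := hz
    have hz0' : (0 : ℝ) < ‖z‖ := by
      simp only [mem_singleton_iff] at hz0
      exact norm_pos_iff.mpr hz0
    have hz2' : ‖z‖ < 2 := by
      simpa [mem_ball, dist_zero_right] using hz2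
    have hex : ∃ k : ℕ, (2 : ℝ) ^ (-(k : ℝ) - 1) < ‖z‖ := by
      obtain ⟨m, hm⟩ := exists_pow_lt_of_lt_one hz0' (by norm_num : (1:ℝ)/2 < 1)
      refine ⟨m, lt_of_le_of_lt ?_ hm⟩
      have h1 : (2:ℝ) ^ (-(m:ℝ) - 1) ≤ (2:ℝ) ^ (-(m:ℝ)) :=
        Real.rpow_le_rpow_of_exponent_le one_le_two (by linarith)
      have h2 : (2:ℝ) ^ (-(m:ℝ)) = ((1:ℝ)/2) ^ m := by
        rw [Real.rpow_neg (by norm_num), Real.rpow_natCast]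
        simp [one_div, inv_pow]
      linarith [h1, h2.le]
    set k := Nat.find hex with hk
    have hk1 : (2 : ℝ) ^ (-(k : ℝ) - 1) < ‖z‖ := Nat.find_spec hex
    have hk2 : ‖z‖ < (2 : ℝ) ^ ((1 : ℝ) - (k : ℝ)) := by
      rcases Nat.eq_zero_or_pos k with h0 | hpos
      · rw [h0]; simpa using hz2'
      · obtain ⟨j, hj⟩ := Nat.exists_eq_succ_of_ne_zero hpos.ne'
        have hnot : ¬ ((2 : ℝ) ^ (-(j : ℝ) - 1) < ‖z‖) := Nat.find_min hex (by omega)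
        push_neg at hnot
        have : (-(j : ℝ) - 1) = (1 : ℝ) - (k : ℝ) + -1 := by
          rw [hj]; push_cast; ring
        rw [this] at hnot
        calc ‖z‖ ≤ (2:ℝ) ^ ((1:ℝ) - k + -1) := hnot
          _ < (2:ℝ) ^ ((1:ℝ) - (k:ℝ)) := by
            apply Real.rpow_lt_rpow_of_exponent_lt (by norm_num)
            linarith
    refine mem_iUnion.mpr ⟨k, ?_, ?_⟩
    · simpa [mem_ball, dist_zero_right] using hk2
    · simp only [mem_closedBall, dist_zero_right, not_le]
      exact hk1
  -- splitting off zero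
  have hzero : volume ({(0:E)} : Set E) = 0 := singleton_null hn1 0
  have hstep0 : C2 n s ≤ ∫⁻ z in ball (0:E) 2 \ {0}, ENNReal.ofReal (‖z‖ ^ (s - (n:ℝ))) := by
    rw [C2]
    have : volume.restrict (ball (0:E) 2) = volume.restrict ((ball (0:E) 2 \ {0}) ∪ {0}) := by
      congr 1
      rw [diff_union_self]
      rw [union_eq_self_of_subset_right]
      intro z hz
      simp only [mem_singleton_iff] at hz
      subst hz
      simp [mem_ball, dist_zero_right]
    rw [this]
    refine le_trans (lintegral_union_le _ _ _) ?_
    rw [setLIntegral_measure_zero _ _ hzero]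
    simp
    exact le_rfl
  -- per-annulus bound
  have hterm : ∀ k : ℕ, (∫⁻ z in A k, ENNReal.ofReal (‖z‖ ^ (s - (n:ℝ))))
      ≤ (ENNReal.ofReal ((2:ℝ) ^ (2 * (n:ℝ) - s)) * v) * (ENNReal.ofReal ((2:ℝ) ^ (-s))) ^ k := by
    intro k
    have hbd : ∀ z ∈ A k, ENNReal.ofReal (‖z‖ ^ (s - (n:ℝ)))
        ≤ ENNReal.ofReal (((2:ℝ) ^ (-(k:ℝ) - 1)) ^ (s - (n:ℝ))) := by
      intro z hz
      obtain ⟨_, hz2⟩ := hz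
      simp only [mem_closedBall, dist_zero_right, not_le] at hz2
      refine ENNReal.ofReal_le_ofReal ?_
      exact Real.rpow_le_rpow_of_nonpos (by positivity) hz2.le (by linarith)
    calc (∫⁻ z in A k, ENNReal.ofReal (‖z‖ ^ (s - (n:ℝ))))
        ≤ ∫⁻ _ in A k, ENNReal.ofReal (((2:ℝ) ^ (-(k:ℝ) - 1)) ^ (s - (n:ℝ))) := by
          refine setLIntegral_mono (by fun_prop) hbd
      _ = ENNReal.ofReal (((2:ℝ) ^ (-(k:ℝ) - 1)) ^ (s - (n:ℝ))) * volume (A k) :=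
          setLIntegral_const _ _
      _ ≤ ENNReal.ofReal (((2:ℝ) ^ (-(k:ℝ) - 1)) ^ (s - (n:ℝ))) *
            (ENNReal.ofReal (((2:ℝ) ^ ((1:ℝ) - (k:ℝ))) ^ n) * v) := by
          refine mul_le_mul_right ?_ _
          refine le_trans (measure_mono (fun z hz => hz.1)) ?_
          rw [hv, Measure.addHaar_ball volume (0:E) (by positivity),
            finrank_euclideanSpace_fin]
      _ = (ENNReal.ofReal ((2:ℝ) ^ (2 * (n:ℝ) - s)) * v) * (ENNReal.ofReal ((2:ℝ) ^ (-s))) ^ k := by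
          have key : ((2:ℝ)^(-(k:ℝ)-1))^(s-(n:ℝ)) * ((2:ℝ)^((1:ℝ)-(k:ℝ)))^(n:ℕ)
              = (2:ℝ)^(2*(n:ℝ)-s) * ((2:ℝ)^(-s))^(k:ℕ) := by
            rw [← Real.rpow_natCast ((2:ℝ)^((1:ℝ)-(k:ℝ))) n,
              ← Real.rpow_natCast ((2:ℝ)^(-s)) k,
              ← Real.rpow_mul (by norm_num), ← Real.rpow_mul (by norm_num),
              ← Real.rpow_mul (by norm_num),
              ← Real.rpow_add (by norm_num), ← Real.rpow_add (by norm_num)]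
            congr 1
            ring
          rw [← mul_assoc, ← ENNReal.ofReal_mul (by positivity), key,
            ENNReal.ofReal_mul (by positivity), ENNReal.ofReal_pow (by positivity)]
          ring
  -- sum up
  set q : ℝ≥0∞ := ENNReal.ofReal ((2:ℝ) ^ (-s)) with hq
  set c1 : ℝ≥0∞ := ENNReal.ofReal ((2:ℝ) ^ (2 * (n:ℝ) - s)) * v with hc1
  have hq1 : q < 1 := by
    rw [hq]
    exact ENNReal.ofReal_lt_one.mpr
      (Real.rpow_lt_one_of_one_lt_of_neg one_lt_two (by linarith))
  have hc1top : c1 < ⊤ := ENNReal.mul_lt_top ENNReal.ofReal_lt_top hvlt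
  calc C2 n s ≤ ∫⁻ z in ball (0:E) 2 \ {0}, ENNReal.ofReal (‖z‖ ^ (s - (n:ℝ))) := hstep0
    _ ≤ ∫⁻ z in ⋃ k, A k, ENNReal.ofReal (‖z‖ ^ (s - (n:ℝ))) :=
        lintegral_mono_set hcover
    _ ≤ ∑' k : ℕ, ∫⁻ z in A k, ENNReal.ofReal (‖z‖ ^ (s - (n:ℝ))) :=
        lintegral_iUnion_le _ _
    _ ≤ ∑' k : ℕ, c1 * q ^ k := ENNReal.tsum_le_tsum hterm
    _ = c1 * ∑' k : ℕ, q ^ k := ENNReal.tsum_mul_left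
    _ = c1 * (1 - q)⁻¹ := by rw [ENNReal.tsum_geometric]
    _ < ⊤ := ENNReal.mul_lt_top hc1top (ENNReal.inv_lt_top.mpr (tsub_pos_of_lt hq1))




noncomputable def C0 (n : ℕ) (s : ℝ) : ℝ := K n s * (C2 n s).toReal

lemma C0_nonneg {n : ℕ} {s : ℝ} (hs0 : 0 < s) : 0 ≤ C0 n s :=
  mul_nonneg (K_pos hs0).le ENNReal.toReal_nonneg

lemma n_one_le {n : ℕ} {s : ℝ} (hs0 : 0 < s) (hn : 2 * s < (n : ℝ)) : 1 ≤ n := by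
  by_contra h
  push_neg at h
  interval_cases n
  · norm_num at hn; linarith

lemma kernel_bound {n : ℕ} {s : ℝ} (hs0 : 0 < s) (hn : 2 * s < (n : ℝ))
    {y : EuclideanSpace ℝ (Fin n)} (hy : ‖y‖ < 1) :
    ∫⁻ x in ball (0 : EuclideanSpace ℝ (Fin n)) 1, ENNReal.ofReal (G' n s x y)
      ≤ ENNReal.ofReal (C0 n s * (1 - ‖y‖) ^ s) := by
  have hn1 : 1 ≤ n := n_one_le hs0 hn
  have hsn : s < (n : ℝ) := by linarith
  set d : ℝ := 1 - ‖y‖ with hd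
  have hd0 : 0 < d := by rw [hd]; linarith
  have hKd : 0 ≤ K n s * d ^ s := mul_nonneg (K_pos hs0).le (Real.rpow_nonneg hd0.le _)
  -- step 1 : pointwise a.e. bound
  have hae : ∀ᵐ x ∂(volume.restrict (ball (0:EuclideanSpace ℝ (Fin n)) 1)),
      ENNReal.ofReal (G' n s x y)
        ≤ ENNReal.ofReal (K n s * d ^ s) * ENNReal.ofReal (‖x - y‖ ^ (s - (n:ℝ))) := by
    have hy0 : (volume.restrict (ball (0:EuclideanSpace ℝ (Fin n)) 1)) {y} = 0 :=
      le_antisymm (le_trans (Measure.restrict_le_self _) (singleton_null hn1 y).le) zero_le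
    filter_upwards [ae_restrict_mem measurableSet_ball,
      (ae_iff.mpr (by simpa using hy0) : ∀ᵐ x ∂(volume.restrict (ball (0:EuclideanSpace ℝ (Fin n)) 1)), x ≠ y)]
      with x hx hxy
    rw [← ENNReal.ofReal_mul hKd]
    refine ENNReal.ofReal_le_ofReal ?_
    have := G'_le hs0 hn (by simpa [mem_ball, dist_zero_right] using hx) hy hxy
    calc G' n s x y ≤ K n s * d ^ s * ‖x - y‖ ^ (s - (n:ℝ)) := by
          rw [hd]; exact this
      _ = K n s * d ^ s * ‖x - y‖ ^ (s - (n:ℝ)) := rfl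
  -- step 2-3 : integrate
  have hmeas : Measurable fun x : EuclideanSpace ℝ (Fin n) => ENNReal.ofReal (‖x - y‖ ^ (s - (n:ℝ))) := by fun_prop
  have hstep : ∫⁻ x in ball (0:EuclideanSpace ℝ (Fin n)) 1, ENNReal.ofReal (G' n s x y)
      ≤ ENNReal.ofReal (K n s * d ^ s) * ∫⁻ x in ball (0:EuclideanSpace ℝ (Fin n)) 1,
          ENNReal.ofReal (‖x - y‖ ^ (s - (n:ℝ))) := by
    refine le_trans (lintegral_mono_ae hae) ?_
    rw [lintegral_const_mul _ hmeas]
  -- step 4 : enlarge and translate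
  have hsub : ball (0:EuclideanSpace ℝ (Fin n)) 1 ⊆ ball y 2 := by
    intro x hx
    rw [mem_ball, dist_zero_right] at hx
    rw [mem_ball, dist_eq_norm]
    calc ‖x - y‖ ≤ ‖x‖ + ‖y‖ := norm_sub_le _ _
      _ < 2 := by linarith
  have htrans : ∫⁻ x in ball y 2, ENNReal.ofReal (‖x - y‖ ^ (s - (n:ℝ))) = C2 n s := by
    have hmp : MeasurePreserving (fun x : EuclideanSpace ℝ (Fin n) => x + y) volume volume :=
      measurePreserving_add_right volume y
    have hemb : MeasurableEmbedding (fun x : EuclideanSpace ℝ (Fin n) => x + y) :=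
      (MeasurableEquiv.addRight y).measurableEmbedding
    have := hmp.setLIntegral_comp_preimage_emb hemb
      (fun x => ENNReal.ofReal (‖x - y‖ ^ (s - (n:ℝ)))) (ball y 2)
    have hpre : (fun x : EuclideanSpace ℝ (Fin n) => x + y) ⁻¹' (ball y 2) = ball 0 2 := by
      ext x
      simp [mem_ball, dist_eq_norm]
    rw [hpre] at this
    rw [← this, C2]
    congr 1
    ext x
    simp
  have hC2 : C2 n s = ENNReal.ofReal ((C2 n s).toReal) :=
    (ENNReal.ofReal_toReal (C2_lt_top hn1 hs0 hsn).ne).symm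
  calc ∫⁻ x in ball (0:EuclideanSpace ℝ (Fin n)) 1, ENNReal.ofReal (G' n s x y)
      ≤ ENNReal.ofReal (K n s * d ^ s) * ∫⁻ x in ball (0:EuclideanSpace ℝ (Fin n)) 1,
          ENNReal.ofReal (‖x - y‖ ^ (s - (n:ℝ))) := hstep
    _ ≤ ENNReal.ofReal (K n s * d ^ s) * ∫⁻ x in ball y 2,
          ENNReal.ofReal (‖x - y‖ ^ (s - (n:ℝ))) :=
        mul_le_mul_right (lintegral_mono_set hsub) _
    _ = ENNReal.ofReal (K n s * d ^ s) * ENNReal.ofReal ((C2 n s).toReal) := by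
        rw [htrans, ← hC2]
    _ = ENNReal.ofReal (C0 n s * d ^ s) := by
        rw [← ENNReal.ofReal_mul hKd, C0]
        congr 1
        ring


end Stmt5Aux

open Stmt5Aux

/-- Let `0 < s < 1` and `n > 2s`. There is `C > 0` depending only on `n, s`
such that for every measurable `f : B₁ → ℝ` with `∫_{B₁} (1-|y|)^s |f(y)| dy < ∞`, the
Green potential satisfies `∫_{B₁} |(G*f)(x)| dx ≤ C ∫_{B₁} (1-|y|)^s |f(y)| dy`. -/

theorem stmt5 (n : ℕ) (s : ℝ) (hs0 : 0 < s) (hs1 : s < 1) (hn : 2 * s < (n : ℝ)) :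
    ∃ C : ℝ, 0 < C ∧ ∀ f : EuclideanSpace ℝ (Fin n) → ℝ,
      Measurable f →
      IntegrableOn (fun y => (1 - ‖y‖) ^ s * |f y|)
        (ball (0 : EuclideanSpace ℝ (Fin n)) 1) →
      ∫ x in ball (0 : EuclideanSpace ℝ (Fin n)) 1,
          |∫ y in ball (0 : EuclideanSpace ℝ (Fin n)) 1, greenKer n s x y * f y|
        ≤ C * ∫ y in ball (0 : EuclideanSpace ℝ (Fin n)) 1, (1 - ‖y‖) ^ s * |f y| := by
  refine ⟨C0 n s + 1, by linarith [C0_nonneg (n := n) hs0], ?_⟩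
  intro f hf hint
  set B : Set (EuclideanSpace ℝ (Fin n)) := ball 0 1 with hB
  set ν : Measure (EuclideanSpace ℝ (Fin n)) := volume.restrict B with hν
  -- the product integrand
  set Φ : EuclideanSpace ℝ (Fin n) → EuclideanSpace ℝ (Fin n) → ℝ≥0∞ :=
    fun x y => ENNReal.ofReal (G' n s x y * |f y|) with hΦ
  have huncur : Measurable (Function.uncurry Φ) := by
    rw [hΦ]
    exact ENNReal.measurable_ofReal.comp
      ((G'_meas n hs0 hn).mul ((hf.comp measurable_snd).abs))
  -- the weight
  set w : EuclideanSpace ℝ (Fin n) → ℝ := fun y => (1 - ‖y‖) ^ s * |f y| with hw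
  have hwmeas : Measurable w := by
    rw [hw]
    refine Measurable.mul ?_ hf.abs
    fun_prop
  set I : ℝ≥0∞ := ∫⁻ y in B, ENNReal.ofReal (w y) with hI
  have hI_ne : I ≠ ⊤ := by
    have h1 : I ≤ ∫⁻ y in B, ‖w y‖₊ := by
      exact lintegral_mono fun y => Real.ofReal_le_enorm (w y)
    exact (lt_of_le_of_lt h1 hint.2).ne
  -- the double integral bound
  have hdouble : (∫⁻ y in B, ∫⁻ x in B, Φ x y) ≤ ENNReal.ofReal (C0 n s) * I := by
    have hstep : ∀ᵐ y ∂ν, (∫⁻ x in B, Φ x y)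
        ≤ ENNReal.ofReal (C0 n s) * ENNReal.ofReal (w y) := by
      filter_upwards [ae_restrict_mem measurableSet_ball] with y hy
      have hy1 : ‖y‖ < 1 := by simpa [hB, mem_ball, dist_zero_right] using hy
      have e1 : (∫⁻ x in B, Φ x y)
          = (∫⁻ x in B, ENNReal.ofReal (G' n s x y)) * ENNReal.ofReal |f y| := by
        have hmx : Measurable fun x : EuclideanSpace ℝ (Fin n) =>
            ENNReal.ofReal (G' n s x y) :=
          ENNReal.measurable_ofReal.comp (G'_meas_left n hs0 hn y)
        rw [← lintegral_mul_const _ hmx]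
        congr 1
        ext x
        rw [hΦ]
        exact ENNReal.ofReal_mul (G'_nonneg n s x y)
      rw [e1]
      calc (∫⁻ x in B, ENNReal.ofReal (G' n s x y)) * ENNReal.ofReal |f y|
          ≤ ENNReal.ofReal (C0 n s * (1 - ‖y‖) ^ s) * ENNReal.ofReal |f y| :=
            mul_le_mul_left (kernel_bound hs0 hn hy1) _
        _ = ENNReal.ofReal (C0 n s) * ENNReal.ofReal (w y) := by
            rw [ENNReal.ofReal_mul (C0_nonneg hs0), hw, mul_assoc,
              ← ENNReal.ofReal_mul (Real.rpow_nonneg (by linarith) s)]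
    calc (∫⁻ y in B, ∫⁻ x in B, Φ x y)
        ≤ ∫⁻ y in B, ENNReal.ofReal (C0 n s) * ENNReal.ofReal (w y) :=
          lintegral_mono_ae hstep
      _ = ENNReal.ofReal (C0 n s) * I := by
          have hmw : Measurable fun y : EuclideanSpace ℝ (Fin n) =>
            ENNReal.ofReal (w y) := ENNReal.measurable_ofReal.comp hwmeas
          rw [hI, lintegral_const_mul _ hmw]
  have hswap : (∫⁻ x in B, ∫⁻ y in B, Φ x y) = ∫⁻ y in B, ∫⁻ x in B, Φ x y :=
    lintegral_lintegral_swap huncur.aemeasurable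
  set D : ℝ≥0∞ := ∫⁻ x in B, ∫⁻ y in B, Φ x y with hD
  have hD_ne : D ≠ ⊤ := by
    rw [hswap]
    exact (lt_of_le_of_lt hdouble
      (ENNReal.mul_lt_top ENNReal.ofReal_lt_top hI_ne.lt_top)).ne
  -- pointwise inner bound
  have hTmeas : Measurable fun x => ∫⁻ y in B, Φ x y :=
    Measurable.lintegral_prod_right huncur
  have hclaim : ∀ x ∈ B, |∫ y in B, greenKer n s x y * f y|
      ≤ (∫⁻ y in B, Φ x y).toReal := by
    intro x hx
    have hx1 : ‖x‖ < 1 := by simpa [hB, mem_ball, dist_zero_right] using hx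
    have h1 : |∫ y in B, greenKer n s x y * f y| ≤ ∫ y in B, ‖greenKer n s x y * f y‖ := by
      have := norm_integral_le_integral_norm (μ := ν)
        (fun y => greenKer n s x y * f y)
      rwa [Real.norm_eq_abs] at this
    have hcong : (fun y => ‖greenKer n s x y * f y‖) =ᵐ[ν]
        fun y => G' n s x y * |f y| := by
      filter_upwards [ae_restrict_mem measurableSet_ball] with y hy
      have hy1 : ‖y‖ < 1 := by simpa [hB, mem_ball, dist_zero_right] using hy
      rw [norm_mul, Real.norm_eq_abs, Real.norm_eq_abs,
        greenKer_eq hx1.le hy1.le, abs_of_nonneg (G'_nonneg n s x y)]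
    have h2 : (∫ y in B, ‖greenKer n s x y * f y‖) = ∫ y in B, G' n s x y * |f y| :=
      integral_congr_ae hcong
    have h3 : (∫ y in B, G' n s x y * |f y|) = (∫⁻ y in B, Φ x y).toReal := by
      rw [hΦ]
      refine integral_eq_lintegral_of_nonneg_ae ?_ ?_
      · filter_upwards with y
        exact mul_nonneg (G'_nonneg n s x y) (abs_nonneg _)
      · exact ((G'_meas_right n hs0 hn x).mul hf.abs).aestronglyMeasurable
    linarith [h1, h2, h3]
  -- integrate the claim
  have hTint : Integrable (fun x => (∫⁻ y in B, Φ x y).toReal) ν :=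
    integrable_toReal_of_lintegral_ne_top hTmeas.aemeasurable hD_ne
  have hmain : (∫ x in B, |∫ y in B, greenKer n s x y * f y|)
      ≤ ∫ x in B, (∫⁻ y in B, Φ x y).toReal := by
    refine integral_mono_of_nonneg ?_ hTint ?_
    · filter_upwards with x
      exact abs_nonneg _
    · filter_upwards [ae_restrict_mem measurableSet_ball] with x hx
      exact hclaim x hx
  have hDval : (∫ x in B, (∫⁻ y in B, Φ x y).toReal) = D.toReal :=
    integral_toReal hTmeas.aemeasurable (ae_lt_top hTmeas hD_ne)
  have hRval : (∫ y in B, w y) = I.toReal := by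
    rw [hI]
    refine integral_eq_lintegral_of_nonneg_ae ?_ hwmeas.aestronglyMeasurable
    filter_upwards [ae_restrict_mem measurableSet_ball] with y hy
    have hy1 : ‖y‖ < 1 := by simpa [hB, mem_ball, dist_zero_right] using hy
    exact mul_nonneg (Real.rpow_nonneg (by linarith) s) (abs_nonneg _)
  have hDle : D.toReal ≤ C0 n s * I.toReal := by
    have h1 : D ≤ ENNReal.ofReal (C0 n s) * I := by rw [hswap]; exact hdouble
    have h2 : D.toReal ≤ (ENNReal.ofReal (C0 n s) * I).toReal :=
      ENNReal.toReal_mono (ENNReal.mul_ne_top ENNReal.ofReal_ne_top hI_ne) h1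
    rwa [ENNReal.toReal_mul, ENNReal.toReal_ofReal (C0_nonneg hs0)] at h2
  have hRnn : 0 ≤ I.toReal := ENNReal.toReal_nonneg
  calc (∫ x in B, |∫ y in B, greenKer n s x y * f y|)
      ≤ D.toReal := by rw [← hDval]; exact hmain
    _ ≤ C0 n s * I.toReal := hDle
    _ ≤ (C0 n s + 1) * I.toReal := by nlinarith
    _ = (C0 n s + 1) * ∫ y in B, w y := by rw [hRval]
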